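/- For any positive masses m₁, m₂, m₃, m₄ there is at most one normalized sequentially-ordered co-circular central configuration: if r and r' both belong to 𝒟 = {r ∈ 𝒢 : I(r) = 1, P(r) = 0, H(r) = 0} and each satisfies the co-circular central configuration equations for some real multipliers (λ, σ) and (λ', σ') respectively, then r = r'. -/

import Mathlib

/-
Auxiliary development for the uniqueness of co-circular central configurations.

The key function is `χ(t) = 1/t - t²` (the normalized `λ = 1` version of
`1/t - λ t²`), which is strictly decreasing on `(0, ∞)`.  Multiplying each
central-configuration equation by `r_ij²` produces the relations
`mᵢmⱼ χ(r_ij) = ±σ r_ij r_kl`, whence (using `P = 0`) the vertex identities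
`Σ_j mᵢmⱼ χ(r_ij) = 0`.  From these one deduces `λ > 0`, `σ > 0` and, comparing
two normalized solutions with multipliers `σ ≤ τ`, a monotonicity argument that
forces all mutual distances to agree.  Finally `I = 1` pins down the scaling.
-/

lemma cc_chi_anti {a b : ℝ} (ha : 0 < a) (hab : a < b) : 1/b - b^2 < 1/a - a^2 := by
  have h1 : 1/b < 1/a := one_div_lt_one_div_of_lt ha hab
  have h2 : a^2 < b^2 := by nlinarith
  linarith

lemma cc_chi_anti_le {a b : ℝ} (ha : 0 < a) (hab : a ≤ b) : 1/b - b^2 ≤ 1/a - a^2 := by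
  rcases eq_or_lt_of_le hab with h | h
  · rw [h]
  · exact (cc_chi_anti ha h).le

lemma cc_lt_of_chi_lt {a b : ℝ} (ha : 0 < a) (hb : 0 < b)
    (h : 1/a - a^2 < 1/b - b^2) : b < a := by
  by_contra h'; push_neg at h'
  have := cc_chi_anti_le ha h'; linarith

lemma cc_le_of_chi_le {a b : ℝ} (ha : 0 < a) (hb : 0 < b)
    (h : 1/a - a^2 ≤ 1/b - b^2) : b ≤ a := by
  by_contra h'; push_neg at h'
  have := cc_chi_anti ha h'; linarith

lemma cc_chi_inj {a b : ℝ} (ha : 0 < a) (hb : 0 < b)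
    (h : 1/a - a^2 = 1/b - b^2) : a = b :=
  le_antisymm (cc_le_of_chi_le hb ha h.ge) (cc_le_of_chi_le ha hb h.le)

lemma cc_one_lt_of_chi_neg {t : ℝ} (ht : 0 < t) (h : 1/t - t^2 < 0) : 1 < t := by
  by_contra h'; push_neg at h'
  have h1 : 1 ≤ 1/t := by rw [le_div_iff₀ ht]; linarith
  nlinarith

lemma cc_lt_one_of_chi_pos {t : ℝ} (ht : 0 < t) (h : 0 < 1/t - t^2) : t < 1 := by
  by_contra h'; push_neg at h'
  have h1 : 1/t ≤ 1 := by rw [div_le_one ht]; linarith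
  nlinarith

lemma cc_eq_one_of_chi_zero {t : ℝ} (ht : 0 < t) (h : 1/t - t^2 = 0) : t = 1 := by
  rcases lt_trichotomy t 1 with h' | h' | h'
  · have h1 : 1 < 1/t := by rw [lt_div_iff₀ ht]; linarith
    nlinarith
  · exact h'
  · have h1 : 1/t < 1 := by rw [div_lt_one ht]; linarith
    nlinarith

lemma cc_neg_of_mul_neg {K x : ℝ} (hK : 0 < K) (h : K * x < 0) : x < 0 := by
  by_contra h'; push_neg at h'; nlinarith

lemma cc_pos_of_mul_pos {K x : ℝ} (hK : 0 < K) (h : 0 < K * x) : 0 < x := by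
  by_contra h'; push_neg at h'; nlinarith

/-- Comparison of a "pair" of the system: a smaller multiplier gives (weakly)
larger distances. -/
lemma cc_pair_le {A B s t a b c d : ℝ} (hA : 0 < A) (hB : 0 < B)
    (ha : 0 < a) (hb : 0 < b) (hc : 0 < c) (hd : 0 < d)
    (hs : 0 < s) (ht : 0 < t) (hst : s ≤ t)
    (h1 : A*(1/a - a^2) = s*(a*b)) (h2 : B*(1/b - b^2) = s*(a*b))
    (h3 : A*(1/c - c^2) = t*(c*d)) (h4 : B*(1/d - d^2) = t*(c*d)) :
    c ≤ a ∧ d ≤ b := by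
  have hca : c ≤ a := by
    by_contra hcon; push_neg at hcon
    have k0 : 1/c - c^2 < 1/a - a^2 := cc_chi_anti ha hcon
    have k1 : t*(c*d) < s*(a*b) := by
      rw [← h1, ← h3]; exact mul_lt_mul_of_pos_left k0 hA
    have k2 : B*(1/d - d^2) < B*(1/b - b^2) := by rw [h2, h4]; exact k1
    have k3 : 1/d - d^2 < 1/b - b^2 := lt_of_mul_lt_mul_left k2 hB.le
    have k4 : b < d := cc_lt_of_chi_lt hd hb k3
    have k5 : a*b < c*d := by nlinarith
    have k6 : s*(a*b) ≤ t*(a*b) := mul_le_mul_of_nonneg_right hst (by positivity)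
    have k7 : t*(a*b) < t*(c*d) := mul_lt_mul_of_pos_left k5 ht
    linarith
  have hχac : 1/a - a^2 ≤ 1/c - c^2 := cc_chi_anti_le hc hca
  have k8 : B*(1/b - b^2) ≤ B*(1/d - d^2) := by
    rw [h2, h4, ← h1, ← h3]; exact mul_le_mul_of_nonneg_left hχac hA.le
  have k9 : 1/b - b^2 ≤ 1/d - d^2 := le_of_mul_le_mul_left k8 hB
  exact ⟨hca, cc_le_of_chi_le hb hd k9⟩

/-- Strict version of `cc_pair_le`. -/
lemma cc_pair_lt {A B s t a b c d : ℝ} (hA : 0 < A) (hB : 0 < B)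
    (ha : 0 < a) (hb : 0 < b) (hc : 0 < c) (hd : 0 < d)
    (hs : 0 < s) (ht : 0 < t) (hst : s < t)
    (h1 : A*(1/a - a^2) = s*(a*b)) (h2 : B*(1/b - b^2) = s*(a*b))
    (h3 : A*(1/c - c^2) = t*(c*d)) (h4 : B*(1/d - d^2) = t*(c*d)) :
    c < a ∧ d < b := by
  obtain ⟨hca, hdb⟩ := cc_pair_le hA hB ha hb hc hd hs ht hst.le h1 h2 h3 h4
  have hne : c ≠ a := by
    intro he
    subst he
    have e1 : B*(1/b - b^2) = B*(1/d - d^2) := by linarith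
    have e2 : 1/b - b^2 = 1/d - d^2 := mul_left_cancel₀ hB.ne' e1
    have e3 : b = d := cc_chi_inj hb hd e2
    subst e3
    have e4 : s*(c*b) = t*(c*b) := by linarith
    have : 0 < c*b := by positivity
    nlinarith
  have hca' : c < a := lt_of_le_of_ne hca hne
  have hne2 : d ≠ b := by
    intro he
    subst he
    have e1 : A*(1/a - a^2) = A*(1/c - c^2) := by linarith
    have e2 : a = c := cc_chi_inj ha hc (mul_left_cancel₀ hA.ne' e1)
    exact absurd e2.symm hca'.ne
  exact ⟨hca', lt_of_le_of_ne hdb hne2⟩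

/-- The multiplier of a normalized (`λ = 1`) co-circular solution is positive. -/
lemma cc_sig_pos {m1 m2 m3 m4 x12 x13 x14 x23 x24 x34 sig : ℝ}
    (hm1 : 0 < m1) (hm2 : 0 < m2) (hm3 : 0 < m3) (hm4 : 0 < m4)
    (h12 : 0 < x12) (h13 : 0 < x13) (h14 : 0 < x14)
    (h23 : 0 < x23) (h24 : 0 < x24) (h34 : 0 < x34)
    (X12 : m1*m2*(1/x12 - x12^2) = sig*(x12*x34))
    (X34 : m3*m4*(1/x34 - x34^2) = sig*(x12*x34))
    (X13 : m1*m3*(1/x13 - x13^2) = -(sig*(x13*x24)))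
    (X24 : m2*m4*(1/x24 - x24^2) = -(sig*(x13*x24)))
    (X14 : m1*m4*(1/x14 - x14^2) = sig*(x14*x23))
    (X23 : m2*m3*(1/x23 - x23^2) = sig*(x14*x23))
    (hxP : x12*x34 + x14*x23 - x13*x24 = 0) : 0 < sig := by
  rcases lt_trichotomy sig 0 with hneg | h0 | hpos
  · exfalso
    have hq1 : sig*(x12*x34) < 0 := mul_neg_of_neg_of_pos hneg (mul_pos h12 h34)
    have hq2 : sig*(x14*x23) < 0 := mul_neg_of_neg_of_pos hneg (mul_pos h14 h23)
    have hq3 : 0 < -(sig*(x13*x24)) := by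
      have := mul_neg_of_neg_of_pos hneg (mul_pos h13 h24); linarith
    have c12 := cc_neg_of_mul_neg (mul_pos hm1 hm2) (X12 ▸ hq1)
    have c34 := cc_neg_of_mul_neg (mul_pos hm3 hm4) (X34 ▸ hq1)
    have c14 := cc_neg_of_mul_neg (mul_pos hm1 hm4) (X14 ▸ hq2)
    have c23 := cc_neg_of_mul_neg (mul_pos hm2 hm3) (X23 ▸ hq2)
    have c13 := cc_pos_of_mul_pos (mul_pos hm1 hm3) (X13 ▸ hq3)
    have c24 := cc_pos_of_mul_pos (mul_pos hm2 hm4) (X24 ▸ hq3)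
    have g12 : 1 < x12 := cc_one_lt_of_chi_neg h12 c12
    have g34 : 1 < x34 := cc_one_lt_of_chi_neg h34 c34
    have g14 : 1 < x14 := cc_one_lt_of_chi_neg h14 c14
    have g23 : 1 < x23 := cc_one_lt_of_chi_neg h23 c23
    have g13 : x13 < 1 := cc_lt_one_of_chi_pos h13 c13
    have g24 : x24 < 1 := cc_lt_one_of_chi_pos h24 c24
    have p1 : 1 < x12*x34 := g12.trans (lt_mul_of_one_lt_right (by linarith) g34)
    have p2 : 1 < x14*x23 := g14.trans (lt_mul_of_one_lt_right (by linarith) g23)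
    have p3 : x13*x24 < 1 := (mul_lt_of_lt_one_left h24 g13).trans g24
    linarith
  · exfalso
    subst h0
    have e12 : x12 = 1 := cc_eq_one_of_chi_zero h12 (by
      have h : m1*m2*(1/x12 - x12^2) = 0 := by rw [X12]; ring
      exact (mul_eq_zero.mp h).resolve_left (mul_pos hm1 hm2).ne')
    have e34 : x34 = 1 := cc_eq_one_of_chi_zero h34 (by
      have h : m3*m4*(1/x34 - x34^2) = 0 := by rw [X34]; ring
      exact (mul_eq_zero.mp h).resolve_left (mul_pos hm3 hm4).ne')
    have e14 : x14 = 1 := cc_eq_one_of_chi_zero h14 (by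
      have h : m1*m4*(1/x14 - x14^2) = 0 := by rw [X14]; ring
      exact (mul_eq_zero.mp h).resolve_left (mul_pos hm1 hm4).ne')
    have e23 : x23 = 1 := cc_eq_one_of_chi_zero h23 (by
      have h : m2*m3*(1/x23 - x23^2) = 0 := by rw [X23]; ring
      exact (mul_eq_zero.mp h).resolve_left (mul_pos hm2 hm3).ne')
    have e13 : x13 = 1 := cc_eq_one_of_chi_zero h13 (by
      have h : m1*m3*(1/x13 - x13^2) = 0 := by rw [X13]; ring
      exact (mul_eq_zero.mp h).resolve_left (mul_pos hm1 hm3).ne')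
    have e24 : x24 = 1 := cc_eq_one_of_chi_zero h24 (by
      have h : m2*m4*(1/x24 - x24^2) = 0 := by rw [X24]; ring
      exact (mul_eq_zero.mp h).resolve_left (mul_pos hm2 hm4).ne')
    rw [e12, e34, e14, e23, e13, e24] at hxP
    norm_num at hxP
  · exact hpos

set_option maxHeartbeats 1000000 in
/-- Uniqueness of normalized (`λ = 1`) co-circular solutions. -/
lemma cc_key {m1 m2 m3 m4 x12 x13 x14 x23 x24 x34 y12 y13 y14 y23 y24 y34 sig tau : ℝ}
    (hm1 : 0 < m1) (hm2 : 0 < m2) (hm3 : 0 < m3) (hm4 : 0 < m4)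
    (hx12 : 0 < x12) (hx13 : 0 < x13) (hx14 : 0 < x14)
    (hx23 : 0 < x23) (hx24 : 0 < x24) (hx34 : 0 < x34)
    (hy12 : 0 < y12) (hy13 : 0 < y13) (hy14 : 0 < y14)
    (hy23 : 0 < y23) (hy24 : 0 < y24) (hy34 : 0 < y34)
    (hst : sig ≤ tau)
    (X12 : m1*m2*(1/x12 - x12^2) = sig*(x12*x34))
    (X34 : m3*m4*(1/x34 - x34^2) = sig*(x12*x34))
    (X13 : m1*m3*(1/x13 - x13^2) = -(sig*(x13*x24)))
    (X24 : m2*m4*(1/x24 - x24^2) = -(sig*(x13*x24)))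
    (X14 : m1*m4*(1/x14 - x14^2) = sig*(x14*x23))
    (X23 : m2*m3*(1/x23 - x23^2) = sig*(x14*x23))
    (hxP : x12*x34 + x14*x23 - x13*x24 = 0)
    (Y12 : m1*m2*(1/y12 - y12^2) = tau*(y12*y34))
    (Y34 : m3*m4*(1/y34 - y34^2) = tau*(y12*y34))
    (Y13 : m1*m3*(1/y13 - y13^2) = -(tau*(y13*y24)))
    (Y24 : m2*m4*(1/y24 - y24^2) = -(tau*(y13*y24)))
    (Y14 : m1*m4*(1/y14 - y14^2) = tau*(y14*y23))
    (Y23 : m2*m3*(1/y23 - y23^2) = tau*(y14*y23))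
    (hyP : y12*y34 + y14*y23 - y13*y24 = 0) :
    x12 = y12 ∧ x13 = y13 ∧ x14 = y14 ∧ x23 = y23 ∧ x24 = y24 ∧ x34 = y34 := by
  have hs : 0 < sig :=
    cc_sig_pos hm1 hm2 hm3 hm4 hx12 hx13 hx14 hx23 hx24 hx34 X12 X34 X13 X24 X14 X23 hxP
  have ht : 0 < tau :=
    cc_sig_pos hm1 hm2 hm3 hm4 hy12 hy13 hy14 hy23 hy24 hy34 Y12 Y34 Y13 Y24 Y14 Y23 hyP
  have V1x : m1*m2*(1/x12 - x12^2) + m1*m3*(1/x13 - x13^2) + m1*m4*(1/x14 - x14^2) = 0 := by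
    linear_combination X12 + X13 + X14 + sig*hxP
  have V2x : m1*m2*(1/x12 - x12^2) + m2*m3*(1/x23 - x23^2) + m2*m4*(1/x24 - x24^2) = 0 := by
    linear_combination X12 + X23 + X24 + sig*hxP
  have V1y : m1*m2*(1/y12 - y12^2) + m1*m3*(1/y13 - y13^2) + m1*m4*(1/y14 - y14^2) = 0 := by
    linear_combination Y12 + Y13 + Y14 + tau*hyP
  have V2y : m1*m2*(1/y12 - y12^2) + m2*m3*(1/y23 - y23^2) + m2*m4*(1/y24 - y24^2) = 0 := by
    linear_combination Y12 + Y23 + Y24 + tau*hyP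
  rcases eq_or_lt_of_le hst with heq | hlt
  · -- equal multipliers
    subst heq
    obtain ⟨q1a, q1b⟩ := cc_pair_le (mul_pos hm1 hm2) (mul_pos hm3 hm4) hx12 hx34 hy12 hy34
      hs hs le_rfl X12 X34 Y12 Y34
    obtain ⟨q2a, q2b⟩ := cc_pair_le (mul_pos hm1 hm2) (mul_pos hm3 hm4) hy12 hy34 hx12 hx34
      hs hs le_rfl Y12 Y34 X12 X34
    obtain ⟨q3a, q3b⟩ := cc_pair_le (mul_pos hm1 hm4) (mul_pos hm2 hm3) hx14 hx23 hy14 hy23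
      hs hs le_rfl X14 X23 Y14 Y23
    obtain ⟨q4a, q4b⟩ := cc_pair_le (mul_pos hm1 hm4) (mul_pos hm2 hm3) hy14 hy23 hx14 hx23
      hs hs le_rfl Y14 Y23 X14 X23
    have e12 : x12 = y12 := le_antisymm q2a q1a
    have e34 : x34 = y34 := le_antisymm q2b q1b
    have e14 : x14 = y14 := le_antisymm q4a q3a
    have e23 : x23 = y23 := le_antisymm q4b q3b
    rw [e12, e14] at V1x
    have h13 : m1*m3*(1/x13 - x13^2) = m1*m3*(1/y13 - y13^2) := by linarith
    have e13 : x13 = y13 :=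
      cc_chi_inj hx13 hy13 (mul_left_cancel₀ (mul_pos hm1 hm3).ne' h13)
    rw [e12, e23] at V2x
    have h24 : m2*m4*(1/x24 - x24^2) = m2*m4*(1/y24 - y24^2) := by linarith
    have e24 : x24 = y24 :=
      cc_chi_inj hx24 hy24 (mul_left_cancel₀ (mul_pos hm2 hm4).ne' h24)
    exact ⟨e12, e13, e14, e23, e24, e34⟩
  · -- strictly smaller multiplier: contradiction with both Ptolemy relations
    exfalso
    obtain ⟨q1a, q1b⟩ := cc_pair_lt (mul_pos hm1 hm2) (mul_pos hm3 hm4) hx12 hx34 hy12 hy34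
      hs ht hlt X12 X34 Y12 Y34
    obtain ⟨q2a, q2b⟩ := cc_pair_lt (mul_pos hm1 hm4) (mul_pos hm2 hm3) hx14 hx23 hy14 hy23
      hs ht hlt X14 X23 Y14 Y23
    have c12 : 1/x12 - x12^2 < 1/y12 - y12^2 := cc_chi_anti hy12 q1a
    have c14 : 1/x14 - x14^2 < 1/y14 - y14^2 := cc_chi_anti hy14 q2a
    have c23 : 1/x23 - x23^2 < 1/y23 - y23^2 := cc_chi_anti hy23 q2b
    have t12 : m1*m2*(1/x12 - x12^2) < m1*m2*(1/y12 - y12^2) :=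
      mul_lt_mul_of_pos_left c12 (mul_pos hm1 hm2)
    have t14 : m1*m4*(1/x14 - x14^2) < m1*m4*(1/y14 - y14^2) :=
      mul_lt_mul_of_pos_left c14 (mul_pos hm1 hm4)
    have t23 : m2*m3*(1/x23 - x23^2) < m2*m3*(1/y23 - y23^2) :=
      mul_lt_mul_of_pos_left c23 (mul_pos hm2 hm3)
    have u13 : m1*m3*(1/y13 - y13^2) < m1*m3*(1/x13 - x13^2) := by linarith
    have u24 : m2*m4*(1/y24 - y24^2) < m2*m4*(1/x24 - x24^2) := by linarith
    have d13 : x13 < y13 :=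
      cc_lt_of_chi_lt hy13 hx13 (lt_of_mul_lt_mul_left u13 (mul_pos hm1 hm3).le)
    have d24 : x24 < y24 :=
      cc_lt_of_chi_lt hy24 hx24 (lt_of_mul_lt_mul_left u24 (mul_pos hm2 hm4).le)
    have pr1 : y12*y34 < x12*x34 := mul_lt_mul'' q1a q1b hy12.le hy34.le
    have pr2 : y14*y23 < x14*x23 := mul_lt_mul'' q2a q2b hy14.le hy23.le
    have pr3 : x13*x24 < y13*y24 := mul_lt_mul'' d13 d24 hx13.le hx24.le
    linarith [hxP, hyP, pr1, pr2, pr3]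

/-- Polynomial form of a central-configuration equation. -/
lemma cc_polyE {K lam sig r q : ℝ} (hr : r ≠ 0)
    (E : K*(1/r^3 - lam) = sig*(q/r)) : K*(1 - r^3*lam) = sig*q*r^2 := by
  have h := E
  field_simp at h
  apply mul_right_cancel₀ hr
  linear_combination r * h

/-- Rescaling a central-configuration equation to `λ = 1`. -/
lemma cc_scaleA {K lam sig c r q : ℝ} (hlam : lam ≠ 0) (hc : c ≠ 0) (hr : r ≠ 0)
    (h3 : c^3 = lam) (E : K*(1/r^3 - lam) = sig*(q/r)) :
    K*(1/(c*r) - (c*r)^2) = (sig/lam)*((c*r)*(c*q)) := by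
  have E' : K*(1 - r^3*lam) = sig*q*r^2 := cc_polyE hr E
  field_simp
  linear_combination c^3*E' - K*h3

/-- The Lagrange multiplier `λ` is positive. -/
lemma cc_lam_pos {m1 m2 m3 m4 r12 r13 r14 r24 r23 r34 lam sig : ℝ}
    (hm1 : 0 < m1) (hm2 : 0 < m2) (hm3 : 0 < m3) (hm4 : 0 < m4)
    (h12 : 0 < r12) (h13 : 0 < r13) (h14 : 0 < r14)
    (G12 : m1*m2*(1 - r12^3*lam) = sig*r34*r12^2)
    (G13 : m1*m3*(1 - r13^3*lam) = (-sig)*r24*r13^2)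
    (G14 : m1*m4*(1 - r14^3*lam) = sig*r23*r14^2)
    (hP : r12*r34 + r14*r23 - r13*r24 = 0) : 0 < lam := by
  have V : m1*m2*(r13*r14)*(1 - r12^3*lam) + m1*m3*(r12*r14)*(1 - r13^3*lam)
      + m1*m4*(r12*r13)*(1 - r14^3*lam) = 0 := by
    linear_combination (r13*r14)*G12 + (r12*r14)*G13 + (r12*r13)*G14
      + (sig*r12*r13*r14)*hP
  have hEq : lam * (m1*m2*(r13*r14)*r12^3 + m1*m3*(r12*r14)*r13^3
      + m1*m4*(r12*r13)*r14^3)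
      = m1*m2*(r13*r14) + m1*m3*(r12*r14) + m1*m4*(r12*r13) := by
    linear_combination (-1 : ℝ) * V
  have hN : 0 < m1*m2*(r13*r14) + m1*m3*(r12*r14) + m1*m4*(r12*r13) := by positivity
  have hD : 0 < m1*m2*(r13*r14)*r12^3 + m1*m3*(r12*r14)*r13^3
      + m1*m4*(r12*r13)*r14^3 := by positivity
  by_contra h
  push_neg at h
  nlinarith [mul_nonneg (neg_nonneg.mpr h) hD.le]

/-- The Cayley–Menger determinant of four points, as a function of the six
mutual distances `(r₁₂, r₁₃, r₁₄, r₂₃, r₂₄, r₃₄)`. -/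
noncomputable def cayleyMenger (r12 r13 r14 r23 r24 r34 : ℝ) : ℝ :=
  Matrix.det !![(0:ℝ), 1, 1, 1, 1;
                1, 0, r12^2, r13^2, r14^2;
                1, r12^2, 0, r23^2, r24^2;
                1, r13^2, r23^2, 0, r34^2;
                1, r14^2, r24^2, r34^2, 0]

/-- The Ptolemy function `P`. -/
def ptolemyFun (r12 r13 r14 r23 r24 r34 : ℝ) : ℝ :=
  r12*r34 + r14*r23 - r13*r24

/-- The moment of inertia `I` as a function of the mutual distances. -/
noncomputable def momentInertia (m1 m2 m3 m4 r12 r13 r14 r23 r24 r34 : ℝ) : ℝ :=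
  (1/(2*(m1 + m2 + m3 + m4))) *
    (m1*m2*r12^2 + m1*m3*r13^2 + m1*m4*r14^2 +
     m2*m3*r23^2 + m2*m4*r24^2 + m3*m4*r34^2)

/-- Membership in `𝒢`: all mutual distances are positive, the Cayley–Menger
determinant is nonnegative, and all strict triangle inequalities hold. -/
noncomputable def geomRealizable (r12 r13 r14 r23 r24 r34 : ℝ) : Prop :=
  0 < r12 ∧ 0 < r13 ∧ 0 < r14 ∧ 0 < r23 ∧ 0 < r24 ∧ 0 < r34 ∧
  0 ≤ cayleyMenger r12 r13 r14 r23 r24 r34 ∧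
  r12 + r23 > r13 ∧ r12 + r13 > r23 ∧ r13 + r23 > r12 ∧
  r12 + r24 > r14 ∧ r12 + r14 > r24 ∧ r14 + r24 > r12 ∧
  r13 + r34 > r14 ∧ r13 + r14 > r34 ∧ r14 + r34 > r13 ∧
  r23 + r34 > r24 ∧ r23 + r24 > r34 ∧ r24 + r34 > r23

/-- Membership in `𝒟 = {r ∈ 𝒢 : I(r) = 1, P(r) = 0, H(r) = 0}`. -/
noncomputable def memD (m1 m2 m3 m4 r12 r13 r14 r23 r24 r34 : ℝ) : Prop :=
  geomRealizable r12 r13 r14 r23 r24 r34 ∧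
  momentInertia m1 m2 m3 m4 r12 r13 r14 r23 r24 r34 = 1 ∧
  ptolemyFun r12 r13 r14 r23 r24 r34 = 0 ∧
  cayleyMenger r12 r13 r14 r23 r24 r34 = 0

/-- The co-circular central configuration equations with multipliers `lam`, `sig`. -/
def cocircularCCEqns (m1 m2 m3 m4 r12 r13 r14 r23 r24 r34 lam sig : ℝ) : Prop :=
  m1*m2*(1/r12^3 - lam) = sig * (r34/r12) ∧
  m3*m4*(1/r34^3 - lam) = sig * (r12/r34) ∧
  m1*m3*(1/r13^3 - lam) = -sig * (r24/r13) ∧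
  m2*m4*(1/r24^3 - lam) = -sig * (r13/r24) ∧
  m1*m4*(1/r14^3 - lam) = sig * (r23/r14) ∧
  m2*m3*(1/r23^3 - lam) = sig * (r14/r23)

set_option maxHeartbeats 2000000 in
/-- There is at most one normalized sequentially-ordered co-circular central
configuration for each choice of positive masses. -/
theorem cocircular_cc_unique (m1 m2 m3 m4 : ℝ)
    (hm1 : 0 < m1) (hm2 : 0 < m2) (hm3 : 0 < m3) (hm4 : 0 < m4)
    (r12 r13 r14 r23 r24 r34 s12 s13 s14 s23 s24 s34 : ℝ)
    (hrD : memD m1 m2 m3 m4 r12 r13 r14 r23 r24 r34)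
    (hsD : memD m1 m2 m3 m4 s12 s13 s14 s23 s24 s34)
    (hrcc : ∃ lam sig : ℝ,
      cocircularCCEqns m1 m2 m3 m4 r12 r13 r14 r23 r24 r34 lam sig)
    (hscc : ∃ lam' sig' : ℝ,
      cocircularCCEqns m1 m2 m3 m4 s12 s13 s14 s23 s24 s34 lam' sig') :
    r12 = s12 ∧ r13 = s13 ∧ r14 = s14 ∧ r23 = s23 ∧ r24 = s24 ∧ r34 = s34 := by
  obtain ⟨lam, sig, Er⟩ := hrcc
  obtain ⟨lam', sig', Es⟩ := hscc
  obtain ⟨E12, E34, E13, E24, E14, E23⟩ := Er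
  obtain ⟨F12, F34, F13, F24, F14, F23⟩ := Es
  obtain ⟨⟨p12, p13, p14, p23, p24, p34, -, -, -, -, -, -, -, -, -, -, -, -, -⟩,
    hrI, hrP, -⟩ := hrD
  obtain ⟨⟨q12, q13, q14, q23, q24, q34, -, -, -, -, -, -, -, -, -, -, -, -, -⟩,
    hsI, hsP, -⟩ := hsD
  simp only [ptolemyFun] at hrP hsP
  simp only [momentInertia] at hrI hsI
  -- sign-normalized diagonal equations
  have E13n : m1*m3*(1/r13^3 - lam) = (-sig)*(r24/r13) := by linear_combination E13
  have E24n : m2*m4*(1/r24^3 - lam) = (-sig)*(r13/r24) := by linear_combination E24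
  have F13n : m1*m3*(1/s13^3 - lam') = (-sig')*(s24/s13) := by linear_combination F13
  have F24n : m2*m4*(1/s24^3 - lam') = (-sig')*(s13/s24) := by linear_combination F24
  -- λ > 0 for both solutions
  have hlam : 0 < lam :=
    cc_lam_pos hm1 hm2 hm3 hm4 p12 p13 p14
      (cc_polyE p12.ne' E12) (cc_polyE p13.ne' E13n) (cc_polyE p14.ne' E14) hrP
  have hlam' : 0 < lam' :=
    cc_lam_pos hm1 hm2 hm3 hm4 q12 q13 q14
      (cc_polyE q12.ne' F12) (cc_polyE q13.ne' F13n) (cc_polyE q14.ne' F14) hsP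
  -- cube roots
  obtain ⟨c, hc, hc3⟩ : ∃ c : ℝ, 0 < c ∧ c^3 = lam := by
    refine ⟨lam ^ ((1:ℝ)/3), Real.rpow_pos_of_pos hlam _, ?_⟩
    rw [← Real.rpow_natCast (lam ^ ((1:ℝ)/3)) 3, ← Real.rpow_mul hlam.le]
    norm_num
  obtain ⟨c', hc', hc3'⟩ : ∃ c : ℝ, 0 < c ∧ c^3 = lam' := by
    refine ⟨lam' ^ ((1:ℝ)/3), Real.rpow_pos_of_pos hlam' _, ?_⟩
    rw [← Real.rpow_natCast (lam' ^ ((1:ℝ)/3)) 3, ← Real.rpow_mul hlam'.le]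
    norm_num
  -- normalized (λ = 1) relations for the first solution
  have X12 := cc_scaleA hlam.ne' hc.ne' p12.ne' hc3 E12
  have X34 : m3*m4*(1/(c*r34) - (c*r34)^2) = (sig/lam)*((c*r12)*(c*r34)) := by
    linear_combination cc_scaleA hlam.ne' hc.ne' p34.ne' hc3 E34
  have X14 := cc_scaleA hlam.ne' hc.ne' p14.ne' hc3 E14
  have X23 : m2*m3*(1/(c*r23) - (c*r23)^2) = (sig/lam)*((c*r14)*(c*r23)) := by
    linear_combination cc_scaleA hlam.ne' hc.ne' p23.ne' hc3 E23
  have X13 : m1*m3*(1/(c*r13) - (c*r13)^2) = -((sig/lam)*((c*r13)*(c*r24))) := by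
    linear_combination cc_scaleA hlam.ne' hc.ne' p13.ne' hc3 E13n
  have X24 : m2*m4*(1/(c*r24) - (c*r24)^2) = -((sig/lam)*((c*r13)*(c*r24))) := by
    linear_combination cc_scaleA hlam.ne' hc.ne' p24.ne' hc3 E24n
  have hxP : (c*r12)*(c*r34) + (c*r14)*(c*r23) - (c*r13)*(c*r24) = 0 := by
    linear_combination c^2*hrP
  -- normalized (λ = 1) relations for the second solution
  have Y12 := cc_scaleA hlam'.ne' hc'.ne' q12.ne' hc3' F12
  have Y34 : m3*m4*(1/(c'*s34) - (c'*s34)^2) = (sig'/lam')*((c'*s12)*(c'*s34)) := by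
    linear_combination cc_scaleA hlam'.ne' hc'.ne' q34.ne' hc3' F34
  have Y14 := cc_scaleA hlam'.ne' hc'.ne' q14.ne' hc3' F14
  have Y23 : m2*m3*(1/(c'*s23) - (c'*s23)^2) = (sig'/lam')*((c'*s14)*(c'*s23)) := by
    linear_combination cc_scaleA hlam'.ne' hc'.ne' q23.ne' hc3' F23
  have Y13 : m1*m3*(1/(c'*s13) - (c'*s13)^2) = -((sig'/lam')*((c'*s13)*(c'*s24))) := by
    linear_combination cc_scaleA hlam'.ne' hc'.ne' q13.ne' hc3' F13n
  have Y24 : m2*m4*(1/(c'*s24) - (c'*s24)^2) = -((sig'/lam')*((c'*s13)*(c'*s24))) := by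
    linear_combination cc_scaleA hlam'.ne' hc'.ne' q24.ne' hc3' F24n
  have hyP : (c'*s12)*(c'*s34) + (c'*s14)*(c'*s23) - (c'*s13)*(c'*s24) = 0 := by
    linear_combination c'^2*hsP
  have z12 : 0 < c*r12 := mul_pos hc p12
  have z13 : 0 < c*r13 := mul_pos hc p13
  have z14 : 0 < c*r14 := mul_pos hc p14
  have z23 : 0 < c*r23 := mul_pos hc p23
  have z24 : 0 < c*r24 := mul_pos hc p24
  have z34 : 0 < c*r34 := mul_pos hc p34
  have w12 : 0 < c'*s12 := mul_pos hc' q12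
  have w13 : 0 < c'*s13 := mul_pos hc' q13
  have w14 : 0 < c'*s14 := mul_pos hc' q14
  have w23 : 0 < c'*s23 := mul_pos hc' q23
  have w24 : 0 < c'*s24 := mul_pos hc' q24
  have w34 : 0 < c'*s34 := mul_pos hc' q34
  -- uniqueness of the normalized configuration
  have hkey : c*r12 = c'*s12 ∧ c*r13 = c'*s13 ∧ c*r14 = c'*s14 ∧
      c*r23 = c'*s23 ∧ c*r24 = c'*s24 ∧ c*r34 = c'*s34 := by
    rcases le_total (sig/lam) (sig'/lam') with hcase | hcase
    · exact cc_key hm1 hm2 hm3 hm4 z12 z13 z14 z23 z24 z34 w12 w13 w14 w23 w24 w34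
        hcase X12 X34 X13 X24 X14 X23 hxP Y12 Y34 Y13 Y24 Y14 Y23 hyP
    · obtain ⟨k12, k13, k14, k23, k24, k34⟩ :=
        cc_key hm1 hm2 hm3 hm4 w12 w13 w14 w23 w24 w34 z12 z13 z14 z23 z24 z34
          hcase Y12 Y34 Y13 Y24 Y14 Y23 hyP X12 X34 X13 X24 X14 X23 hxP
      exact ⟨k12.symm, k13.symm, k14.symm, k23.symm, k24.symm, k34.symm⟩
  obtain ⟨k12, k13, k14, k23, k24, k34⟩ := hkey
  -- recover the scale from I = 1
  have hM : (0:ℝ) < m1 + m2 + m3 + m4 := by linarith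
  have hSr : m1*m2*r12^2 + m1*m3*r13^2 + m1*m4*r14^2 +
      m2*m3*r23^2 + m2*m4*r24^2 + m3*m4*r34^2 = 2*(m1 + m2 + m3 + m4) := by
    field_simp at hrI
    linarith
  have hSs : m1*m2*s12^2 + m1*m3*s13^2 + m1*m4*s14^2 +
      m2*m3*s23^2 + m2*m4*s24^2 + m3*m4*s34^2 = 2*(m1 + m2 + m3 + m4) := by
    field_simp at hsI
    linarith
  have g12 : (c*r12)^2 = (c'*s12)^2 := by rw [k12]
  have g13 : (c*r13)^2 = (c'*s13)^2 := by rw [k13]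
  have g14 : (c*r14)^2 = (c'*s14)^2 := by rw [k14]
  have g23 : (c*r23)^2 = (c'*s23)^2 := by rw [k23]
  have g24 : (c*r24)^2 = (c'*s24)^2 := by rw [k24]
  have g34 : (c*r34)^2 = (c'*s34)^2 := by rw [k34]
  have hcc : c^2 * (2*(m1 + m2 + m3 + m4)) = c'^2 * (2*(m1 + m2 + m3 + m4)) := by
    linear_combination m1*m2*g12 + m1*m3*g13 + m1*m4*g14 + m2*m3*g23 + m2*m4*g24
      + m3*m4*g34 - c^2*hSr + c'^2*hSs
  have hsq : c^2 = c'^2 := by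
    have h2M : (2*(m1 + m2 + m3 + m4)) ≠ 0 := by positivity
    exact mul_right_cancel₀ h2M hcc
  have hceq : c = c' := by
    have h1 : (c - c')*(c + c') = 0 := by linear_combination hsq
    rcases mul_eq_zero.mp h1 with h | h
    · linarith
    · exfalso; linarith
  rw [← hceq] at k12 k13 k14 k23 k24 k34
  exact ⟨mul_left_cancel₀ hc.ne' k12, mul_left_cancel₀ hc.ne' k13,
    mul_left_cancel₀ hc.ne' k14, mul_left_cancel₀ hc.ne' k23,
    mul_left_cancel₀ hc.ne' k24, mul_left_cancel₀ hc.ne' k34⟩
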